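/- Let $\mathcal{F}$, $\mathcal{A}_1$, $\mathcal{A}_2$, $\mathcal{B}_1$, $\mathcal{B}_2$ be sub-$\sigma$-algebras such that $\mathcal{A}_1$ and $\mathcal{A}_2$ are conditionally independent given $\mathcal{F}$, $\mathcal{B}_1$ is independent of $\mathcal{F} \vee \mathcal{A}_1 \vee \mathcal{A}_2 \vee \mathcal{B}_2$, and $\mathcal{B}_2$ is independent of $\mathcal{F} \vee \mathcal{A}_1 \vee \mathcal{A}_2$. Then $\mathcal{A}_1 \vee \mathcal{B}_1$ and $\mathcal{A}_2 \vee \mathcal{B}_2$ are conditionally independent given $\mathcal{F}$. -/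

import Mathlib

open MeasureTheory ProbabilityTheory Set

/-- Conditional independence of two sub-σ-algebras `m₁`, `m₂` given `𝓕`, with respect to a
probability measure on `(Ω, m0)`: `P(A ∩ B | 𝓕) = P(A | 𝓕) P(B | 𝓕)` a.s. for all
`A ∈ m₁`, `B ∈ m₂`. -/
def CondIndepGiven {Ω : Type*} (m0 : MeasurableSpace Ω) (P : @MeasureTheory.Measure Ω m0)
    (𝓕 m₁ m₂ : MeasurableSpace Ω) : Prop :=
  ∀ A, MeasurableSet[m₁] A → ∀ B, MeasurableSet[m₂] B →
    (@MeasureTheory.condExp Ω ℝ 𝓕 m0 _ _ P (Set.indicator (A ∩ B) fun _ => (1 : ℝ)))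
      =ᵐ[P] fun ω => (@MeasureTheory.condExp Ω ℝ 𝓕 m0 _ _ P (Set.indicator A fun _ => (1 : ℝ))) ω
        * (@MeasureTheory.condExp Ω ℝ 𝓕 m0 _ _ P (Set.indicator B fun _ => (1 : ℝ))) ω

namespace CondIndepAux

variable {Ω : Type*} {𝓕 : MeasurableSpace Ω} {m0 : MeasurableSpace Ω} {P : Measure Ω}
  [IsProbabilityMeasure P]

noncomputable def ind (A : Set Ω) : Ω → ℝ := Set.indicator A fun _ => (1 : ℝ)

lemma int_ind {A : Set Ω} (hA : MeasurableSet[m0] A) : Integrable (ind A) P :=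
  (integrable_const (1 : ℝ)).indicator hA

lemma condexp_bdd (h𝓕 : 𝓕 ≤ m0) {A : Set Ω} (hA : MeasurableSet[m0] A) :
    ∀ᵐ ω ∂P, ‖(P[ind A|𝓕]) ω‖ ≤ 1 := by
  have h0 : 0 ≤ᵐ[P] P[ind A|𝓕] :=
    condExp_nonneg (Filter.Eventually.of_forall fun ω => Set.indicator_nonneg (by simp) ω)
  have h1 : P[ind A|𝓕] ≤ᵐ[P] P[(fun _ => (1:ℝ))|𝓕] := by
    refine condExp_mono (int_ind hA) (integrable_const 1) ?_
    exact Filter.Eventually.of_forall fun ω => Set.indicator_le_self' (by simp) ω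
  rw [condExp_const h𝓕] at h1
  filter_upwards [h0, h1] with ω hω0 hω1
  simp only [Pi.zero_apply] at hω0
  rw [Real.norm_eq_abs, abs_le]
  exact ⟨by linarith, hω1⟩

lemma setIntegral_condexp_ind (h𝓕 : 𝓕 ≤ m0) {A : Set Ω} (hA : MeasurableSet[m0] A)
    {F : Set Ω} (hF : MeasurableSet[𝓕] F) :
    ∫ x in F, (P[ind A|𝓕]) x ∂P = (P (A ∩ F)).toReal := by
  rw [setIntegral_condExp h𝓕 (int_ind hA) hF]
  unfold ind
  rw [setIntegral_indicator hA, setIntegral_const, smul_eq_mul, mul_one, Set.inter_comm, measureReal_def]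

lemma int_mul_ind (h𝓕 : 𝓕 ≤ m0) {A B : Set Ω} (hA : MeasurableSet[m0] A)
    (hB : MeasurableSet[m0] B) :
    Integrable (fun ω => (P[ind B|𝓕]) ω * ind A ω) P :=
  (int_ind hA).bdd_mul (stronglyMeasurable_condExp.mono h𝓕).aestronglyMeasurable
    (condexp_bdd h𝓕 hB)

lemma int_mul_condexp (h𝓕 : 𝓕 ≤ m0) {A B : Set Ω} (hA : MeasurableSet[m0] A)
    (hB : MeasurableSet[m0] B) :
    Integrable (fun ω => (P[ind A|𝓕]) ω * (P[ind B|𝓕]) ω) P :=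
  integrable_condExp.bdd_mul (stronglyMeasurable_condExp.mono h𝓕).aestronglyMeasurable
    (condexp_bdd h𝓕 hA)

lemma setIntegral_mul (h𝓕 : 𝓕 ≤ m0) {A B : Set Ω} (hA : MeasurableSet[m0] A)
    (hB : MeasurableSet[m0] B) {F : Set Ω} (hF : MeasurableSet[𝓕] F) :
    ∫ x in F, ((P[ind A|𝓕]) x * (P[ind B|𝓕]) x) ∂P
      = ∫ x in A ∩ F, (P[ind B|𝓕]) x ∂P := by
  have hpull : P[(fun ω => (P[ind B|𝓕]) ω * ind A ω)|𝓕]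
      =ᵐ[P] fun ω => (P[ind B|𝓕]) ω * (P[ind A|𝓕]) ω := by
    have := condExp_mul_of_stronglyMeasurable_left (μ := P) (m := 𝓕)
      (stronglyMeasurable_condExp (f := ind B))
      (int_mul_ind h𝓕 hA hB) (int_ind hA)
    exact this
  have h1 : ∫ x in F, ((P[ind A|𝓕]) x * (P[ind B|𝓕]) x) ∂P
      = ∫ x in F, (P[(fun ω => (P[ind B|𝓕]) ω * ind A ω)|𝓕]) x ∂P := by
    refine integral_congr_ae ?_
    filter_upwards [ae_restrict_of_ae hpull] with x hx
    rw [hx, mul_comm]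
  rw [h1, setIntegral_condExp h𝓕 (int_mul_ind h𝓕 hA hB) hF]
  have h2 : ∀ x, (P[ind B|𝓕]) x * ind A x = A.indicator (P[ind B|𝓕]) x := by
    intro x
    unfold ind
    by_cases hx : x ∈ A <;> simp [hx]
  simp_rw [h2]
  rw [setIntegral_indicator hA, Set.inter_comm]

lemma setIntegral_ind {A : Set Ω} (hA : MeasurableSet[m0] A) {F : Set Ω}
    (hF : MeasurableSet[m0] F) :
    ∫ x in F, ind A x ∂P = (P (A ∩ F)).toReal := by
  unfold ind
  rw [setIntegral_indicator hA, setIntegral_const, smul_eq_mul, mul_one, Set.inter_comm, measureReal_def]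

/-- Characterization of the factorization property by set integrals. -/
lemma factor_iff (h𝓕 : 𝓕 ≤ m0) {A B : Set Ω} (hA : MeasurableSet[m0] A)
    (hB : MeasurableSet[m0] B) :
    (P[ind (A ∩ B)|𝓕] =ᵐ[P] fun ω => (P[ind A|𝓕]) ω * (P[ind B|𝓕]) ω)
      ↔ ∀ F, MeasurableSet[𝓕] F →
          (P (A ∩ B ∩ F)).toReal = ∫ x in A ∩ F, (P[ind B|𝓕]) x ∂P := by
  constructor
  · intro h F hF
    have h1 : ∫ x in F, (P[ind (A ∩ B)|𝓕]) x ∂P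
        = ∫ x in F, ((P[ind A|𝓕]) x * (P[ind B|𝓕]) x) ∂P :=
      integral_congr_ae (ae_restrict_of_ae h)
    rw [setIntegral_condexp_ind h𝓕 (hA.inter hB) hF, setIntegral_mul h𝓕 hA hB hF] at h1
    exact h1
  · intro h
    refine (ae_eq_condExp_of_forall_setIntegral_eq h𝓕 (int_ind (hA.inter hB))
      (fun s _ _ => (int_mul_condexp h𝓕 hA hB).integrableOn) (fun s hs _ => ?_) ?_).symm
    · rw [setIntegral_mul h𝓕 hA hB hs, ← h s hs, setIntegral_ind (hA.inter hB) (h𝓕 s hs)]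
    · exact ((stronglyMeasurable_condExp.mul stronglyMeasurable_condExp)).aestronglyMeasurable

/-- If `𝓑 ⟂ 𝓜` with `𝓕 ≤ 𝓜`, then `P(S ∩ B | 𝓕) = P(B) P(S | 𝓕)` for `S ∈ 𝓜`, `B ∈ 𝓑`. -/
lemma condexp_inter_indep (h𝓕 : 𝓕 ≤ m0) {𝓑 𝓜 : MeasurableSpace Ω} (h𝓑 : 𝓑 ≤ m0)
    (h𝓜 : 𝓜 ≤ m0) (h𝓕𝓜 : 𝓕 ≤ 𝓜) (hind : Indep 𝓑 𝓜 P)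
    {B S : Set Ω} (hB : MeasurableSet[𝓑] B) (hS : MeasurableSet[𝓜] S) :
    P[ind (S ∩ B)|𝓕] =ᵐ[P] fun ω => (P B).toReal * (P[ind S|𝓕]) ω := by
  let _i : MeasurableSpace Ω := m0
  have hBm : MeasurableSet[m0] B := h𝓑 B hB
  have hSm : MeasurableSet[m0] S := h𝓜 S hS
  have hSBm : MeasurableSet[m0] (S ∩ B) := MeasurableSet.inter hSm hBm
  refine (ae_eq_condExp_of_forall_setIntegral_eq h𝓕 (int_ind hSBm)
    (fun s _ _ => (integrable_condExp.const_mul _).integrableOn)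
    (fun s hs _ => ?_) ?_).symm
  · rw [integral_const_mul, setIntegral_condexp_ind h𝓕 hSm hs,
      setIntegral_ind hSBm (h𝓕 s hs)]
    have hset : S ∩ B ∩ s = B ∩ (S ∩ s) := by
      ext x; simp only [Set.mem_inter_iff]; tauto
    have hiid := (Indep_iff 𝓑 𝓜 P).mp hind B (S ∩ s) hB (hS.inter (h𝓕𝓜 s hs))
    rw [hset, hiid, ENNReal.toReal_mul, mul_comm]
  · exact (stronglyMeasurable_condExp.const_mul _).aestronglyMeasurable

/-- Dynkin extension of the factorization property along a generating π-system. -/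
lemma factor_of_generateFrom (h𝓕 : 𝓕 ≤ m0) {m : MeasurableSpace Ω} (hm : m ≤ m0)
    {S : Set (Set Ω)} (hgen : m = MeasurableSpace.generateFrom S) (hpi : IsPiSystem S)
    {B : Set Ω} (hB : MeasurableSet[m0] B)
    (hbase : ∀ s ∈ S,
      P[ind (s ∩ B)|𝓕] =ᵐ[P] fun ω => (P[ind s|𝓕]) ω * (P[ind B|𝓕]) ω) :
    ∀ A, MeasurableSet[m] A →
      P[ind (A ∩ B)|𝓕] =ᵐ[P] fun ω => (P[ind A|𝓕]) ω * (P[ind B|𝓕]) ω := by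
  let _i : MeasurableSpace Ω := m0
  let C : Set Ω → Prop := fun A => ∀ F, MeasurableSet[𝓕] F →
      (P (A ∩ B ∩ F)).toReal = ∫ x in A ∩ F, (P[ind B|𝓕]) x ∂P
  have hempty : C ∅ := by
    intro F _
    simp [C]
  have hbasic : ∀ t ∈ S, C t := by
    intro t ht
    have htm : MeasurableSet[m0] t := hm t (hgen ▸ MeasurableSpace.measurableSet_generateFrom ht)
    exact (factor_iff h𝓕 htm hB).mp (hbase t ht)
  have hcompl : ∀ t : Set Ω, MeasurableSet[m] t → C t → C tᶜ := by
    intro t htm ht F hF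
    have htm0 : MeasurableSet[m0] t := hm t htm
    have hFm0 : MeasurableSet[m0] F := h𝓕 F hF
    have hadd := measure_inter_add_diff (μ := P) (B ∩ F) htm0
    have hset1 : B ∩ F ∩ t = t ∩ B ∩ F := by
      ext x; simp only [Set.mem_inter_iff]; tauto
    have hset2 : (B ∩ F) \ t = tᶜ ∩ B ∩ F := by
      ext x; simp only [Set.mem_inter_iff, Set.mem_diff, Set.mem_compl_iff]; tauto
    rw [hset1, hset2] at hadd
    have hF' : (P (B ∩ F)).toReal = ∫ x in F, (P[ind B|𝓕]) x ∂P :=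
      (setIntegral_condexp_ind h𝓕 hB hF).symm
    have hsplit : ∫ x in F, (P[ind B|𝓕]) x ∂P
        = ∫ x in t ∩ F, (P[ind B|𝓕]) x ∂P + ∫ x in tᶜ ∩ F, (P[ind B|𝓕]) x ∂P := by
      rw [← setIntegral_union (by
          exact Set.disjoint_of_subset (Set.inter_subset_left)
            (Set.inter_subset_left) disjoint_compl_right)
        (htm0.compl.inter hFm0) integrable_condExp.integrableOn
        integrable_condExp.integrableOn]
      congr 1
      rw [← Set.union_inter_distrib_right, Set.union_compl_self, Set.univ_inter]
    have h1 : (P (t ∩ B ∩ F)).toReal + (P (tᶜ ∩ B ∩ F)).toReal = (P (B ∩ F)).toReal := by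
      rw [← ENNReal.toReal_add (measure_ne_top _ _) (measure_ne_top _ _), hadd]
    have h2 := ht F hF
    linarith [hF', hsplit, h1, h2]
  have hunion : ∀ f : ℕ → Set Ω, Pairwise (Function.onFun Disjoint f) →
      (∀ i, MeasurableSet[m] (f i)) → (∀ i, C (f i)) → C (⋃ i, f i) := by
    intro f hdisj hfm hf F hF
    have hfm0 : ∀ i, MeasurableSet[m0] (f i) := fun i => hm _ (hfm i)
    have hFm0 : MeasurableSet[m0] F := h𝓕 F hF
    have hsetL : (⋃ i, f i) ∩ B ∩ F = ⋃ i, (f i ∩ B ∩ F) := by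
      rw [Set.iUnion_inter, Set.iUnion_inter]
    have hsetR : (⋃ i, f i) ∩ F = ⋃ i, (f i ∩ F) := by
      rw [Set.iUnion_inter]
    have hdisjL : Pairwise (Function.onFun Disjoint fun i => f i ∩ B ∩ F) := fun i j hij =>
      (hdisj hij).mono (Set.inter_subset_left.trans Set.inter_subset_left)
        (Set.inter_subset_left.trans Set.inter_subset_left)
    have hdisjR : Pairwise (Function.onFun Disjoint fun i => f i ∩ F) := fun i j hij =>
      (hdisj hij).mono Set.inter_subset_left Set.inter_subset_left
    rw [hsetL, hsetR,
      measure_iUnion hdisjL fun i => ((hfm0 i).inter hB).inter hFm0,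
      integral_iUnion (fun i => (hfm0 i).inter hFm0) hdisjR
        integrable_condExp.integrableOn,
      ENNReal.tsum_toReal_eq fun i => measure_ne_top _ _]
    exact tsum_congr fun i => hf i F hF
  have key := MeasurableSpace.induction_on_inter (m := m) (C := fun s _ => C s) hgen hpi
    hempty hbasic hcompl hunion
  intro A hAm
  exact (factor_iff h𝓕 (hm A hAm) hB).mpr (key A hAm)

/-- The sup of two σ-algebras is generated by the π-system of intersections. -/
lemma sup_eq_generateFrom_inter (m₁ m₂ : MeasurableSpace Ω) :
    m₁ ⊔ m₂ = MeasurableSpace.generateFrom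
      {s | ∃ a b, MeasurableSet[m₁] a ∧ MeasurableSet[m₂] b ∧ s = a ∩ b} := by
  apply le_antisymm
  · refine sup_le ?_ ?_
    · intro s hs
      exact MeasurableSpace.measurableSet_generateFrom
        ⟨s, Set.univ, hs, MeasurableSet.univ, (Set.inter_univ s).symm⟩
    · intro s hs
      exact MeasurableSpace.measurableSet_generateFrom
        ⟨Set.univ, s, MeasurableSet.univ, hs, (Set.univ_inter s).symm⟩
  · refine MeasurableSpace.generateFrom_le ?_
    rintro s ⟨a, b, ha, hb, rfl⟩
    have ha' : MeasurableSet[m₁ ⊔ m₂] a := (le_sup_left : m₁ ≤ m₁ ⊔ m₂) a ha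
    have hb' : MeasurableSet[m₁ ⊔ m₂] b := (le_sup_right : m₂ ≤ m₁ ⊔ m₂) b hb
    exact MeasurableSet.inter ha' hb'

lemma isPiSystem_inter_sets (m₁ m₂ : MeasurableSpace Ω) :
    IsPiSystem {s | ∃ a b, MeasurableSet[m₁] a ∧ MeasurableSet[m₂] b ∧ s = a ∩ b} := by
  rintro s ⟨a, b, ha, hb, rfl⟩ t ⟨a', b', ha', hb', rfl⟩ -
  refine ⟨a ∩ a', b ∩ b', MeasurableSet.inter ha ha', MeasurableSet.inter hb hb', ?_⟩
  ext x; simp only [Set.mem_inter_iff]; tauto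

end CondIndepAux

open CondIndepAux in
/-- if `𝓐₁ ⊥ 𝓐₂ | 𝓕`, `𝓑₁` is independent of `𝓕 ∨ 𝓐₁ ∨ 𝓐₂ ∨ 𝓑₂`, and
`𝓑₂` is independent of `𝓕 ∨ 𝓐₁ ∨ 𝓐₂`, then `𝓐₁ ∨ 𝓑₁ ⊥ 𝓐₂ ∨ 𝓑₂ | 𝓕`. -/
theorem condIndep_sup_of_condIndep_of_indep
    {Ω : Type*} (m0 : MeasurableSpace Ω) (P : @MeasureTheory.Measure Ω m0)
    [@IsProbabilityMeasure Ω m0 P]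
    (𝓕 𝓐₁ 𝓐₂ 𝓑₁ 𝓑₂ : MeasurableSpace Ω)
    (h𝓕 : 𝓕 ≤ m0) (h𝓐₁ : 𝓐₁ ≤ m0) (h𝓐₂ : 𝓐₂ ≤ m0) (h𝓑₁ : 𝓑₁ ≤ m0) (h𝓑₂ : 𝓑₂ ≤ m0)
    (hA : CondIndepGiven m0 P 𝓕 𝓐₁ 𝓐₂)
    (hB₁ : @ProbabilityTheory.Indep Ω 𝓑₁ (𝓕 ⊔ 𝓐₁ ⊔ 𝓐₂ ⊔ 𝓑₂) m0 P)
    (hB₂ : @ProbabilityTheory.Indep Ω 𝓑₂ (𝓕 ⊔ 𝓐₁ ⊔ 𝓐₂) m0 P) :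
    CondIndepGiven m0 P 𝓕 (𝓐₁ ⊔ 𝓑₁) (𝓐₂ ⊔ 𝓑₂) := by
  intro A hAm B hBm
  let _i : MeasurableSpace Ω := m0
  have h𝓜₁ : (𝓕 ⊔ 𝓐₁ ⊔ 𝓐₂ ⊔ 𝓑₂) ≤ m0 := sup_le (sup_le (sup_le h𝓕 h𝓐₁) h𝓐₂) h𝓑₂
  have h𝓜₂ : (𝓕 ⊔ 𝓐₁ ⊔ 𝓐₂) ≤ m0 := sup_le (sup_le h𝓕 h𝓐₁) h𝓐₂
  have hf2 : 𝓕 ≤ 𝓕 ⊔ 𝓐₁ ⊔ 𝓐₂ := le_sup_left.trans' le_sup_left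
  have hf1 : 𝓕 ≤ 𝓕 ⊔ 𝓐₁ ⊔ 𝓐₂ ⊔ 𝓑₂ := le_sup_left.trans' hf2
  have ha1M1 : 𝓐₁ ≤ 𝓕 ⊔ 𝓐₁ ⊔ 𝓐₂ ⊔ 𝓑₂ := le_sup_left.trans' (le_sup_left.trans' le_sup_right)
  have ha2M1 : 𝓐₂ ≤ 𝓕 ⊔ 𝓐₁ ⊔ 𝓐₂ ⊔ 𝓑₂ := le_sup_left.trans' le_sup_right
  have hb2M1 : 𝓑₂ ≤ 𝓕 ⊔ 𝓐₁ ⊔ 𝓐₂ ⊔ 𝓑₂ := le_sup_right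
  have ha1M2 : 𝓐₁ ≤ 𝓕 ⊔ 𝓐₁ ⊔ 𝓐₂ := le_sup_left.trans' le_sup_right
  have ha2M2 : 𝓐₂ ≤ 𝓕 ⊔ 𝓐₁ ⊔ 𝓐₂ := le_sup_right
  -- Step 1: the factorization for rectangles.
  have hrect : ∀ a₁ b₁ a₂ b₂, MeasurableSet[𝓐₁] a₁ → MeasurableSet[𝓑₁] b₁ →
      MeasurableSet[𝓐₂] a₂ → MeasurableSet[𝓑₂] b₂ →
      P[ind ((a₁ ∩ b₁) ∩ (a₂ ∩ b₂))|𝓕] =ᵐ[P]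
        fun ω => (P[ind (a₁ ∩ b₁)|𝓕]) ω * (P[ind (a₂ ∩ b₂)|𝓕]) ω := by
    intro a₁ b₁ a₂ b₂ ha₁ hb₁ ha₂ hb₂
    have hS1 : MeasurableSet[𝓕 ⊔ 𝓐₁ ⊔ 𝓐₂ ⊔ 𝓑₂] (a₁ ∩ a₂ ∩ b₂) :=
      MeasurableSet.inter (MeasurableSet.inter (ha1M1 _ ha₁) (ha2M1 _ ha₂)) (hb2M1 _ hb₂)
    have hS2 : MeasurableSet[𝓕 ⊔ 𝓐₁ ⊔ 𝓐₂] (a₁ ∩ a₂) :=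
      MeasurableSet.inter (ha1M2 _ ha₁) (ha2M2 _ ha₂)
    have e1 := condexp_inter_indep (P := P) h𝓕 h𝓑₁ h𝓜₁ hf1 hB₁ hb₁ hS1
    have e2 := condexp_inter_indep (P := P) h𝓕 h𝓑₂ h𝓜₂ hf2 hB₂ hb₂ hS2
    have e3 : P[ind (a₁ ∩ a₂)|𝓕] =ᵐ[P]
        fun ω => (P[ind a₁|𝓕]) ω * (P[ind a₂|𝓕]) ω := hA a₁ ha₁ a₂ ha₂
    have e4 := condexp_inter_indep (P := P) h𝓕 h𝓑₁ h𝓜₁ hf1 hB₁ hb₁ (ha1M1 _ ha₁)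
    have e5 := condexp_inter_indep (P := P) h𝓕 h𝓑₂ h𝓜₂ hf2 hB₂ hb₂ (ha2M2 _ ha₂)
    have hset : (a₁ ∩ b₁) ∩ (a₂ ∩ b₂) = (a₁ ∩ a₂ ∩ b₂) ∩ b₁ := by
      ext x; simp only [Set.mem_inter_iff]; tauto
    rw [hset]
    refine e1.trans ?_
    filter_upwards [e2, e3, e4, e5] with ω h2 h3 h4 h5
    rw [h4, h5]
    have : (P[ind (a₁ ∩ a₂ ∩ b₂)|𝓕]) ω = (P[ind ((a₁ ∩ a₂) ∩ b₂)|𝓕]) ω := rfl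
    rw [this, h2, h3]
    ring
  -- Step 2: extend the first coordinate over `𝓐₁ ⊔ 𝓑₁`.
  have hstep1 : ∀ A', MeasurableSet[𝓐₁ ⊔ 𝓑₁] A' → ∀ a₂ b₂, MeasurableSet[𝓐₂] a₂ →
      MeasurableSet[𝓑₂] b₂ →
      P[ind (A' ∩ (a₂ ∩ b₂))|𝓕] =ᵐ[P]
        fun ω => (P[ind A'|𝓕]) ω * (P[ind (a₂ ∩ b₂)|𝓕]) ω := by
    intro A' hA' a₂ b₂ ha₂ hb₂
    have htm0 : MeasurableSet[m0] (a₂ ∩ b₂) :=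
      MeasurableSet.inter (h𝓐₂ _ ha₂) (h𝓑₂ _ hb₂)
    refine factor_of_generateFrom h𝓕 (sup_le h𝓐₁ h𝓑₁)
      (sup_eq_generateFrom_inter 𝓐₁ 𝓑₁) (isPiSystem_inter_sets 𝓐₁ 𝓑₁) htm0 ?_ A' hA'
    rintro s ⟨a₁, b₁, ha₁, hb₁, rfl⟩
    exact hrect a₁ b₁ a₂ b₂ ha₁ hb₁ ha₂ hb₂
  -- Step 3: extend the second coordinate over `𝓐₂ ⊔ 𝓑₂`.
  have hAm0 : MeasurableSet[m0] A := (sup_le h𝓐₁ h𝓑₁) A hAm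
  have key : P[ind (B ∩ A)|𝓕] =ᵐ[P]
      fun ω => (P[ind B|𝓕]) ω * (P[ind A|𝓕]) ω := by
    refine factor_of_generateFrom h𝓕 (sup_le h𝓐₂ h𝓑₂)
      (sup_eq_generateFrom_inter 𝓐₂ 𝓑₂) (isPiSystem_inter_sets 𝓐₂ 𝓑₂) hAm0 ?_ B hBm
    rintro s ⟨a₂, b₂, ha₂, hb₂, rfl⟩
    have h' := hstep1 A hAm a₂ b₂ ha₂ hb₂
    rw [Set.inter_comm A (a₂ ∩ b₂)] at h'
    exact h'.trans (Filter.Eventually.of_forall fun ω => mul_comm _ _)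
  show P[ind (A ∩ B)|𝓕] =ᵐ[P] fun ω => (P[ind A|𝓕]) ω * (P[ind B|𝓕]) ω
  rw [Set.inter_comm A B]
  exact key.trans (Filter.Eventually.of_forall fun ω => mul_comm _ _)
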